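/- For a neutral alternating sign matrix N with one −1 and its vertical reflection N̅, one has c(N̅) = ℓ(N) and ℓ(N̅) = c(N). -/

import Mathlib

open Finset

/-- The nonzero entries alternate in sign, beginning and ending with `1`. -/
def AltList (l : List ℤ) : Prop :=
  l.length % 2 = 1 ∧ ∀ (m : ℕ) (h : m < l.length), l.get ⟨m, h⟩ = if m % 2 = 0 then 1 else -1

/-- Alternating sign matrix: entries in `{-1,0,1}` (forced), and in each row and column
the nonzero entries alternate in sign, beginning and ending with `1`. -/
def IsASM {n : ℕ} (A : Matrix (Fin n) (Fin n) ℤ) : Prop :=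
  (∀ i, AltList ((List.ofFn (fun j => A i j)).filter (fun x => x ≠ 0))) ∧
  (∀ j, AltList ((List.ofFn (fun i => A i j)).filter (fun x => x ≠ 0)))

/-- Vertical reflection: `(reflect A) i j = A i (n+1-j)` (0-indexed as `Fin.rev`). -/
def reflect {n : ℕ} (A : Matrix (Fin n) (Fin n) ℤ) : Matrix (Fin n) (Fin n) ℤ :=
  fun i j => A i j.rev

/-- For a neutral ASM `N` with one `-1` at `(rm, cm)` (closing row `rm`, opening column
`cm`, opening row `rp = rm - 1`, neutrality `N rp cm = 1`), with leading `1` at `(il, cl)`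
and closing column `cc` for `N` (giving `ℓ(N) = lN`, `c(N) = cN`), and with the analogous
data for the vertical reflection `N̅` (whose `-1` is at `(rm, cm.rev)`): leading `1` at
`(il', cl')` and closing column `cc'`, giving `ℓ(N̅) = lN'`, `c(N̅) = cN'`; then
`c(N̅) = ℓ(N)` and `ℓ(N̅) = c(N)`. -/
lemma pair_sub (l : List ℤ) (s t : Fin l.length) (hst : s < t) :
    List.Sublist [l.get s, l.get t] l := by
  rw [List.sublist_iff_exists_fin_orderEmbedding_get_eq]
  refine ⟨OrderEmbedding.ofStrictMono (fun k => if (k : ℕ) = 0 then s else t) ?_, ?_⟩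
  · intro i j hij
    have h1 : (i : ℕ) < (j : ℕ) := hij
    have h2 : (j : ℕ) < 2 := by simpa using j.isLt
    have : (i : ℕ) = 0 ∧ (j : ℕ) = 1 := by omega
    simp [this.1, this.2, hst]
  · intro ix
    fin_cases ix <;> simp [OrderEmbedding.ofStrictMono]

lemma triple_sub (l : List ℤ) (s t u : Fin l.length) (hst : s < t) (htu : t < u) :
    List.Sublist [l.get s, l.get t, l.get u] l := by
  rw [List.sublist_iff_exists_fin_orderEmbedding_get_eq]
  refine ⟨OrderEmbedding.ofStrictMono
      (fun k => if (k : ℕ) = 0 then s else if (k : ℕ) = 1 then t else u) ?_, ?_⟩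
  · intro i j hij
    have h1 : (i : ℕ) < (j : ℕ) := hij
    have h2 : (j : ℕ) < 3 := by simpa using j.isLt
    rcases show ((i:ℕ) = 0 ∧ (j:ℕ) = 1) ∨ ((i:ℕ) = 0 ∧ (j:ℕ) = 2) ∨
        ((i:ℕ) = 1 ∧ (j:ℕ) = 2) by omega with ⟨hi,hj⟩|⟨hi,hj⟩|⟨hi,hj⟩ <;>
      simp [hi, hj, hst, htu, hst.trans htu]
  · intro ix
    fin_cases ix <;> simp [OrderEmbedding.ofStrictMono]

lemma alt_two (l : List ℤ) (h : AltList l) (p q r : Fin l.length)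
    (hpq : p < q) (hqr : q < r)
    (vals : (l.get p = 1 ∧ l.get q = 1 ∧ l.get r = -1) ∨
            (l.get p = -1 ∧ l.get q = 1 ∧ l.get r = 1)) :
    ∃ s t : Fin l.length, s < t ∧ l.get s = -1 ∧ l.get t = -1 := by
  obtain ⟨-, hget⟩ := h
  have keyone : ∀ m : Fin l.length, l.get m = 1 → (m : ℕ) % 2 = 0 := by
    intro m hm
    by_contra hc
    have := hget m m.isLt
    rw [if_neg hc] at this
    simp only [Fin.eta] at this
    rw [hm] at this; norm_num at this
  have keyneg : ∀ m : Fin l.length, l.get m = -1 → (m : ℕ) % 2 = 1 := by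
    intro m hm
    have h2 := keyone m
    by_contra hc
    have := hget m m.isLt
    rw [if_pos (by omega)] at this
    simp only [Fin.eta] at this
    rw [hm] at this; norm_num at this
  have hpq' : (p : ℕ) < q := hpq
  have hqr' : (q : ℕ) < r := hqr
  rcases vals with ⟨hp, hq, hr⟩ | ⟨hp, hq, hr⟩
  · have e1 := keyone p hp; have e2 := keyone q hq; have e3 := keyneg r hr
    refine ⟨⟨(p : ℕ) + 1, by omega⟩, r, ?_, ?_, hr⟩
    · show (p : ℕ) + 1 < (r : ℕ); omega
    · have := hget ((p : ℕ) + 1) (by omega)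
      rwa [if_neg (by omega)] at this
  · have e1 := keyneg p hp; have e2 := keyone q hq; have e3 := keyone r hr
    refine ⟨p, ⟨(q : ℕ) + 1, by omega⟩, ?_, hp, ?_⟩
    · show (p : ℕ) < (q : ℕ) + 1; omega
    · have := hget ((q : ℕ) + 1) (by omega)
      rwa [if_neg (by omega)] at this

lemma neg_pair_false {n : ℕ} (f : Fin n → ℤ) (c : Fin n) (huniq : ∀ j, f j = -1 → j = c)
    (hsub : List.Sublist [(-1 : ℤ), -1] (List.ofFn f)) : False := by
  rw [List.sublist_iff_exists_fin_orderEmbedding_get_eq] at hsub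
  obtain ⟨e, he⟩ := hsub
  have h0 := he ⟨0, by simp⟩
  have h1 := he ⟨1, by simp⟩
  rw [List.get_ofFn] at h0 h1
  have hlt : e ⟨0, by simp⟩ < e ⟨1, by simp⟩ := e.strictMono (by show (0:ℕ) < 1; omega)
  have hc0 := huniq _ h0.symm
  have hc1 := huniq _ h1.symm
  have : (e ⟨0, by simp⟩ : ℕ) = (e ⟨1, by simp⟩ : ℕ) := by
    have := hc0.trans hc1.symm
    exact congrArg Fin.val (Fin.cast_injective _ this)
  exact absurd this (Nat.ne_of_lt hlt)

lemma row_facts {n : ℕ} (f : Fin n → ℤ)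
    (halt : AltList ((List.ofFn f).filter (fun x => x ≠ 0)))
    (c : Fin n) (hc : f c = -1) (huniq : ∀ j, f j = -1 → j = c) :
    (∀ j, f j ≠ 0 → f j = 1 ∨ f j = -1) ∧
    (∀ a b, a < b → f a = 1 → f b = 1 → (b < c ∨ c < a) → False) := by
  set l : List ℤ := (List.ofFn f).filter (fun x => x ≠ 0) with hl
  constructor
  · intro j hj
    have hmem : f j ∈ l := by
      rw [hl, List.mem_filter]
      exact ⟨List.mem_ofFn.2 ⟨j, rfl⟩, by simpa using hj⟩
    obtain ⟨m, hm⟩ := List.mem_iff_get.1 hmem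
    have := halt.2 m m.isLt
    simp only [Fin.eta] at this
    rw [hm] at this
    split at this
    · exact Or.inl this
    · exact Or.inr this
  · intro a b hab ha hb hside
    -- build the ordered triple in (ofFn f)
    have key : List.Sublist [(1:ℤ),1,-1] (List.ofFn f) ∨
               List.Sublist [(-1:ℤ),1,1] (List.ofFn f) := by
      rcases hside with hbc | hca
      · left
        have := triple_sub (List.ofFn f)
          (Fin.cast (List.length_ofFn (f := f)).symm a) (Fin.cast (List.length_ofFn (f := f)).symm b)
          (Fin.cast (List.length_ofFn (f := f)).symm c) hab (by exact hbc)
        simpa [List.get_ofFn, ha, hb, hc] using this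
      · right
        have := triple_sub (List.ofFn f)
          (Fin.cast (List.length_ofFn (f := f)).symm c) (Fin.cast (List.length_ofFn (f := f)).symm a)
          (Fin.cast (List.length_ofFn (f := f)).symm b) (by exact hca) hab
        simpa [List.get_ofFn, ha, hb, hc] using this
    -- move it into the filtered list
    have keyl : List.Sublist [(1:ℤ),1,-1] l ∨ List.Sublist [(-1:ℤ),1,1] l := by
      rcases key with h | h
      · left
        have h2 := h.filter (fun x => decide (x ≠ 0))
        rwa [show List.filter (fun x => decide (x ≠ 0)) [(1:ℤ),1,-1] = [(1:ℤ),1,-1]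
          from by decide] at h2
      · right
        have h2 := h.filter (fun x => decide (x ≠ 0))
        rwa [show List.filter (fun x => decide (x ≠ 0)) [(-1:ℤ),1,1] = [(-1:ℤ),1,1]
          from by decide] at h2
    -- get two -1's in l
    have two : ∃ s t : Fin l.length, s < t ∧ l.get s = -1 ∧ l.get t = -1 := by
      rcases keyl with h | h <;>
      · rw [List.sublist_iff_exists_fin_orderEmbedding_get_eq] at h
        obtain ⟨e, he⟩ := h
        have h0 := (he ⟨0, by simp⟩).symm
        have h1 := (he ⟨1, by simp⟩).symm
        have h2 := (he ⟨2, by simp⟩).symm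
        refine alt_two l halt (e ⟨0, by simp⟩) (e ⟨1, by simp⟩) (e ⟨2, by simp⟩)
          (e.strictMono (by show (0:ℕ) < 1; omega)) (e.strictMono (by show (1:ℕ) < 2; omega)) ?_
        simp at h0
        simp at h1 h2
        first
        | exact Or.inl ⟨h0, h1, h2⟩
        | exact Or.inr ⟨h0, h1, h2⟩
    obtain ⟨s, t, hst, hs, ht⟩ := two
    have := (pair_sub l s t hst).trans List.filter_sublist
    rw [hs, ht] at this
    exact neg_pair_false f c huniq this

theorem stmt_18 {n : ℕ} (N : Matrix (Fin n) (Fin n) ℤ) (hA : IsASM N)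
    (rm cm rp il cl cc il' cl' cc' : Fin n) (lN cN lN' cN' : ℤ)
    (h1 : N rm cm = -1) (huniq : ∀ i j, N i j = -1 → i = rm ∧ j = cm)
    (hrp : (rp : ℕ) + 1 = (rm : ℕ)) (hneu : N rp cm = 1)
    -- leading cell of N
    (hil : rp < il) (hcl : cl < cm) (hl1 : N il cl = 1)
    (hlead : ∀ i j, rp < i → j < cm → N i j = 1 → il ≤ i)
    (hlN : lN = ∑ p ∈ (univ ×ˢ univ).filter
      (fun p : Fin n × Fin n => rp < p.1 ∧ cl < p.2 ∧ p.2 < cm), N p.1 p.2)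
    -- closing cell of N
    (hcc : cm < cc) (hc1 : N rm cc = 1)
    (hcN : cN = ∑ p ∈ (univ ×ˢ univ).filter
      (fun p : Fin n × Fin n => rm < p.1 ∧ cm < p.2 ∧ p.2 < cc), N p.1 p.2)
    -- leading cell of the reflection of N
    (hil' : rp < il') (hcl' : cl' < cm.rev) (hl1' : reflect N il' cl' = 1)
    (hlead' : ∀ i j, rp < i → j < cm.rev → reflect N i j = 1 → il' ≤ i)
    (hlN' : lN' = ∑ p ∈ (univ ×ˢ univ).filter
      (fun p : Fin n × Fin n => rp < p.1 ∧ cl' < p.2 ∧ p.2 < cm.rev), reflect N p.1 p.2)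
    -- closing cell of the reflection of N
    (hcc' : cm.rev < cc') (hc1' : reflect N rm cc' = 1)
    (hcN' : cN' = ∑ p ∈ (univ ×ˢ univ).filter
      (fun p : Fin n × Fin n => rm < p.1 ∧ cm.rev < p.2 ∧ p.2 < cc'), reflect N p.1 p.2) :
    cN' = lN ∧ lN' = cN := by
  have hrpltrm : rp < rm := by rw [Fin.lt_def]; omega
  -- basic facts from row rm
  obtain ⟨hval, hpat⟩ := row_facts (fun j => N rm j) (hA.1 rm) cm h1
    (fun j hj => (huniq rm j hj).2)
  -- the 1 to the left of the -1 in row rm, from the reflection's closing cell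
  have hcrev : cc'.rev < cm := by
    rw [← Fin.rev_rev cm]; exact Fin.rev_lt_rev.mpr hcc'
  have hN1 : N rm cc'.rev = 1 := hc1'
  -- il = rm
  have hilrm : il = rm := le_antisymm (hlead rm cc'.rev hrpltrm hcrev hN1)
    (by rw [Fin.le_def]; have := Fin.lt_def.mp hil; omega)
  have hl1rm : N rm cl = 1 := hilrm ▸ hl1
  -- cl = cc'.rev
  have hclcc' : cl = cc'.rev := by
    rcases lt_trichotomy cl cc'.rev with h | h | h
    · exact absurd (hpat cl cc'.rev h hl1rm hN1 (Or.inl hcrev)) not_false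
    · exact h
    · exact absurd (hpat cc'.rev cl h hN1 hl1rm (Or.inl hcl)) not_false
  -- il' = rm and cl'.rev = cc
  have hccrev : cc.rev < cm.rev := Fin.rev_lt_rev.mpr hcc
  have hN1' : reflect N rm cc.rev = 1 := by
    show N rm cc.rev.rev = 1; rw [Fin.rev_rev]; exact hc1
  have hil'rm : il' = rm := le_antisymm (hlead' rm cc.rev hrpltrm hccrev hN1')
    (by rw [Fin.le_def]; have := Fin.lt_def.mp hil'; omega)
  have hl1'rm : N rm cl'.rev = 1 := hil'rm ▸ hl1'
  have hcmcl' : cm < cl'.rev := by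
    have h := Fin.rev_lt_rev.mpr hcl'
    rwa [Fin.rev_rev] at h
  have hcl'cc : cl'.rev = cc := by
    rcases lt_trichotomy cl'.rev cc with h | h | h
    · exact absurd (hpat cl'.rev cc h hl1'rm hc1 (Or.inr hcmcl')) not_false
    · exact h
    · exact absurd (hpat cc cl'.rev h hc1 hl1'rm (Or.inr hcc)) not_false
  -- zeros in row rm strictly between cl and cm, and between cm and cc
  have hz1 : ∀ j, cl < j → j < cm → N rm j = 0 := by
    intro j h1j h2j
    by_contra hnz
    rcases hval j hnz with hj1 | hjm
    · exact hpat cl j h1j hl1rm hj1 (Or.inl h2j)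
    · exact absurd ((huniq rm j hjm).2) (ne_of_lt h2j)
  have hz2 : ∀ j, cm < j → j < cc → N rm j = 0 := by
    intro j h1j h2j
    by_contra hnz
    rcases hval j hnz with hj1 | hjm
    · exact hpat j cc h2j hj1 hc1 (Or.inr h1j)
    · exact absurd ((huniq rm j hjm).2) (ne_of_gt h1j)
  -- reindexing sums over the reflection
  have hsumrev : ∀ (r a b : Fin n),
      ∑ p ∈ (univ ×ˢ univ).filter
        (fun p : Fin n × Fin n => r < p.1 ∧ a < p.2 ∧ p.2 < b), reflect N p.1 p.2
      = ∑ p ∈ (univ ×ˢ univ).filter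
        (fun p : Fin n × Fin n => r < p.1 ∧ b.rev < p.2 ∧ p.2 < a.rev), N p.1 p.2 := by
    intro r a b
    apply Finset.sum_nbij' (fun p : Fin n × Fin n => (p.1, p.2.rev))
      (fun p : Fin n × Fin n => (p.1, p.2.rev))
    · intro p hp
      simp only [Finset.mem_filter, Finset.mem_product, Finset.mem_univ, true_and] at hp ⊢
      exact ⟨hp.1, Fin.rev_lt_rev.mpr hp.2.2, Fin.rev_lt_rev.mpr hp.2.1⟩
    · intro p hp
      simp only [Finset.mem_filter, Finset.mem_product, Finset.mem_univ, true_and] at hp ⊢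
      have ha := Fin.rev_lt_rev.mpr hp.2.2
      have hb := Fin.rev_lt_rev.mpr hp.2.1
      rw [Fin.rev_rev] at ha hb
      exact ⟨hp.1, ha, hb⟩
    · intro p _; simp [Fin.rev_rev]
    · intro p _; simp [Fin.rev_rev]
    · intro p _; rfl
  -- dropping row rm
  have hdrop : ∀ (a b : Fin n), (∀ j, a < j → j < b → N rm j = 0) →
      ∑ p ∈ (univ ×ˢ univ).filter
        (fun p : Fin n × Fin n => rp < p.1 ∧ a < p.2 ∧ p.2 < b), N p.1 p.2
      = ∑ p ∈ (univ ×ˢ univ).filter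
        (fun p : Fin n × Fin n => rm < p.1 ∧ a < p.2 ∧ p.2 < b), N p.1 p.2 := by
    intro a b hz
    apply (Finset.sum_subset ?_ ?_).symm
    · intro x hx
      simp only [Finset.mem_filter, Finset.mem_product, Finset.mem_univ, true_and] at hx ⊢
      exact ⟨hrpltrm.trans hx.1, hx.2⟩
    · intro x hx hnx
      simp only [Finset.mem_filter, Finset.mem_product, Finset.mem_univ, true_and] at hx hnx
      have hxrm : x.1 = rm := by
        have h2 : ¬ rm < x.1 := fun hc => hnx ⟨hc, hx.2⟩
        have := Fin.lt_def.mp hx.1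
        rw [Fin.lt_def] at h2
        exact Fin.ext (by omega)
      rw [hxrm]
      exact hz x.2 hx.2.1 hx.2.2
  constructor
  · rw [hcN', hsumrev rm cm.rev cc', Fin.rev_rev, hlN, hdrop cl cm hz1, hclcc']
  · rw [hlN', hsumrev rp cl' cm.rev, Fin.rev_rev, hcN, ← hdrop cm cc hz2, hcl'cc]
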